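/- For n > 0 and positive integers β, γ: ∑_{k=0}^n (-1)^n * (k/n) * C((1-β)n, n-k) * C(-γ, k) = γ/(βn+γ) * C(βn+γ, n), where C(x,m) denotes the generalized binomial coefficient (this is the α = 0 specialization of the inverse relation, evaluated via Vandermonde's convolution). -/

import Mathlib

open Finset Polynomial

/-- Ring.choose at a negative integer, in ℚ. -/
lemma ring_choose_neg_nat (a m : ℕ) :
    Ring.choose (-(a : ℚ) - 1) m = (-1) ^ m * ((m + a).choose m : ℚ) := by
  refine nsmul_right_injective (M := ℚ) (Nat.factorial_ne_zero m) ?_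
  simp only
  rw [← Ring.descPochhammer_eq_factorial_smul_choose,
    Polynomial.descPochhammer_smeval_eq_ascPochhammer]
  have h1 : (-(a : ℚ) - 1 - m + 1) = -((a + m : ℕ) : ℚ) := by push_cast; ring
  rw [h1, Polynomial.ascPochhammer_smeval_neg_eq_descPochhammer,
    Polynomial.descPochhammer_smeval_eq_descFactorial,
    Nat.descFactorial_eq_factorial_mul_choose]
  rw [nsmul_eq_mul]
  push_cast
  rw [Nat.add_comm a m]
  rw [Units.smul_def, Int.coe_negOnePow_natCast, zsmul_eq_mul]
  push_cast
  ring

/-- step: k * C(-γ, k) = -γ * C(-γ-1, k-1) -/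
lemma step1 (γ i : ℕ) :
    ((i + 1 : ℕ) : ℚ) * Ring.choose (-(γ : ℚ)) (i + 1)
      = (-(γ : ℚ)) * Ring.choose (-(γ : ℚ) - 1) i := by
  have h := Ring.choose_smul_choose (-(γ : ℚ)) (n := i + 1) (k := 1) (Nat.le_add_left 1 i)
  rw [Nat.choose_one_right, Ring.choose_one_right, nsmul_eq_mul] at h
  simpa using h

theorem stmt_7 (n β γ : ℕ) (hn : 0 < n) (hβ : 0 < β) (hγ : 0 < γ) :
    ∑ k ∈ Finset.range (n + 1),
      (-1 : ℚ) ^ n * ((k : ℚ) / n) * Ring.choose (((1 : ℚ) - β) * n) (n - k) *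
        Ring.choose (-(γ : ℚ)) k
      = ((γ : ℚ) / (β * n + γ)) * ((β * n + γ).choose n) := by
  have hn' : (n : ℚ) ≠ 0 := Nat.cast_ne_zero.mpr hn.ne'
  have hNq : ((β : ℚ) * n + γ) ≠ 0 := by positivity
  -- peel off k = 0 and reindex
  rw [Finset.sum_range_succ']
  simp only [Nat.cast_zero, zero_div, mul_zero, zero_mul, mul_zero, add_zero]
  have hterm : ∀ i ∈ Finset.range n,
      (-1 : ℚ) ^ n * (((i + 1 : ℕ) : ℚ) / n) *
          Ring.choose (((1 : ℚ) - β) * n) (n - (i + 1)) * Ring.choose (-(γ : ℚ)) (i + 1)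
        = ((-1 : ℚ) ^ n * (-(γ : ℚ)) / n) *
          (Ring.choose (-(γ : ℚ) - 1) i * Ring.choose (((1 : ℚ) - β) * n) (n - 1 - i)) := by
    intro i hi
    have h2 : n - (i + 1) = n - 1 - i := by omega
    rw [h2]
    have h := step1 γ i
    push_cast at h ⊢
    linear_combination ((-1 : ℚ) ^ n * Ring.choose (((1 : ℚ) - β) * n) (n - 1 - i) / n) * h
  rw [Finset.sum_congr rfl hterm, ← Finset.mul_sum]
  -- Vandermonde
  have hvdm : ∑ i ∈ Finset.range n,
      Ring.choose (-(γ : ℚ) - 1) i * Ring.choose (((1 : ℚ) - β) * n) (n - 1 - i)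
      = Ring.choose ((-(γ : ℚ) - 1) + ((1 : ℚ) - β) * n) (n - 1) := by
    rw [Ring.add_choose_eq (n - 1) (Commute.all _ _),
      Finset.Nat.sum_antidiagonal_eq_sum_range_succ_mk, (show (n-1).succ = n by omega)]
  rw [hvdm]
  -- identify the negative argument
  have harg : (-(γ : ℚ) - 1) + ((1 : ℚ) - β) * n = -(((β - 1) * n + γ : ℕ) : ℚ) - 1 := by
    have h : (((β - 1) * n + γ : ℕ) : ℚ) = ((β : ℚ) - 1) * n + γ := by
      push_cast [Nat.cast_sub hβ]
      ring
    rw [h]; ring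
  rw [harg, ring_choose_neg_nat]
  have hidx : n - 1 + ((β - 1) * n + γ) = β * n + γ - 1 := by
    have h1 : (β - 1) * n = β * n - n := by rw [Nat.sub_one_mul]
    have h2 : n ≤ β * n := Nat.le_mul_of_pos_left n hβ
    omega
  rw [hidx]
  -- Nat identity : (βn+γ) * C(βn+γ-1, n-1) = C(βn+γ, n) * n
  have e1 : β * n + γ - 1 + 1 = β * n + γ := by
    have h2 : n ≤ β * n := Nat.le_mul_of_pos_left n hβ
    omega
  have e2 : n - 1 + 1 = n := by omega
  have hnat := Nat.add_one_mul_choose_eq (β * n + γ - 1) (n - 1)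
  simp only [Nat.succ_eq_add_one, e1, e2] at hnat
  have hnatq : ((β : ℚ) * n + γ) * ((β * n + γ - 1).choose (n - 1) : ℚ)
      = ((β * n + γ).choose n : ℚ) * n := by exact_mod_cast congrArg (Nat.cast : ℕ → ℚ) hnat
  have hsign : (-1 : ℚ) ^ n * (-1 : ℚ) ^ (n - 1) = -1 := by
    rw [← pow_add]
    have h3 : n + (n - 1) = 2 * (n - 1) + 1 := by omega
    rw [h3, pow_succ, pow_mul]
    simp
  field_simp
  linear_combination (-((β * n + γ - 1).choose (n - 1) : ℚ) * ((β : ℚ) * n + γ)) * hsign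
    + hnatq
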